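/- Let D be a dataset of m labeled points with label ratio r > 0, parameters 0 < μ < ν < 1 with νm, μm ∈ ℕ, μ < r/2, and ν − μ ≤ 2(r − 2μ). Then sup over D' ∈ D_{μm} of opt(ν,μ;D') is finite, where opt(ν,μ;D') = max over η ∈ E_μ of min over f ∈ V_η[ν,μ;D'] of ‖f‖_H², with V_η[ν,μ;D'] = U_η^+[ν,μ;D'] ⊖ U_η^-[ν,μ;D'] the Minkowski difference of the two reduced convex hulls. Moreover the supremum is bounded by max over f in conv{k(·,x_i): y_i=+1} ⊖ conv{k(·,x_i): y_i=−1} of ‖f‖_H², a quantity depending only on the uncontaminated data D. -/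

import Mathlib

open scoped ENNReal

/-- The reduced convex hull `U_η^s[ν,μ;D']`. -/
def redHull {H : Type*} [NormedAddCommGroup H] [InnerProductSpace ℝ H]
    (m : ℕ) (x : Fin m → H) (y : Fin m → ℝ) (η : Fin m → ℝ) (cap : ℝ) (s : ℝ) :
    Set H :=
  {f | ∃ γ : Fin m → ℝ, (∀ i, 0 ≤ γ i) ∧ (∀ i, γ i ≤ η i * cap) ∧
    (∀ i, y i ≠ s → γ i = 0) ∧ (∑ i, γ i = 1) ∧ f = ∑ i, γ i • x i}

/-- `opt(ν,μ;D') = max_{η ∈ E_μ} min_{f ∈ V_η[ν,μ;D']} ‖f‖²`, where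
`V_η = U_η⁺ ⊖ U_η⁻` is the Minkowski difference of the reduced convex hulls;
the infimum over an empty set is `⊤`. -/
noncomputable def svmOpt {H : Type*} [NormedAddCommGroup H] [InnerProductSpace ℝ H]
    (m : ℕ) (x : Fin m → H) (y : Fin m → ℝ) (ν μ : ℝ) : ℝ≥0∞ :=
  ⨆ η ∈ {η : Fin m → ℝ | (∀ i, η i = 0 ∨ η i = 1) ∧ (m : ℝ) * (1 - μ) ≤ ∑ i, η i},
    ⨅ f ∈ {f : H | ∃ a ∈ redHull m x y η (2 / ((ν - μ) * m)) 1,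
        ∃ b ∈ redHull m x y η (2 / ((ν - μ) * m)) (-1), f = a - b},
      (‖f‖₊ ^ 2 : ℝ≥0∞)

open scoped Classical NNReal

lemma aux_card {H : Type*} (m : ℕ) (x x' : Fin m → H) (y y' η : Fin m → ℝ)
    (hη01 : ∀ i, η i = 0 ∨ η i = 1) (s : ℝ) (c : ℝ)
    (hG : (m:ℝ) - c ≤ ((Finset.univ.filter (fun i : Fin m => x' i = x i ∧ y' i = y i)).card : ℝ))
    (hZ : (m:ℝ) - c ≤ ∑ i, η i) :
    (((Finset.univ.filter fun i : Fin m => y i = s).card : ℝ)) - 2*c ≤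
      (((Finset.univ.filter fun i : Fin m =>
          η i = 1 ∧ x' i = x i ∧ y i = s ∧ y' i = s).card : ℝ)) := by
  classical
  set S := Finset.univ.filter fun i : Fin m => η i = 1 ∧ x' i = x i ∧ y i = s ∧ y' i = s
  set P := Finset.univ.filter fun i : Fin m => y i = s
  set A := Finset.univ.filter fun i : Fin m => ¬(x' i = x i ∧ y' i = y i)
  set B := Finset.univ.filter fun i : Fin m => η i ≠ 1
  have hsub : P ⊆ S ∪ A ∪ B := by
    intro i hi
    simp only [P, Finset.mem_filter, Finset.mem_univ, true_and] at hi
    by_cases hA : i ∈ A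
    · exact Finset.mem_union_left _ (Finset.mem_union_right _ hA)
    by_cases hB : i ∈ B
    · exact Finset.mem_union_right _ hB
    simp only [A, Finset.mem_filter, Finset.mem_univ, true_and, not_not] at hA
    simp only [B, Finset.mem_filter, Finset.mem_univ, true_and, not_not] at hB
    refine Finset.mem_union_left _ (Finset.mem_union_left _ ?_)
    simp only [S, Finset.mem_filter, Finset.mem_univ, true_and]
    exact ⟨hB, hA.1, hi, hA.2.trans hi⟩
  have hPcard : P.card ≤ S.card + A.card + B.card :=
    (Finset.card_le_card hsub).trans ((Finset.card_union_le _ _).trans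
      (by gcongr; exact Finset.card_union_le _ _))
  have hAcard : (A.card : ℝ) ≤ c := by
    have := Finset.card_filter_add_card_filter_not
      (s := (Finset.univ : Finset (Fin m))) (p := fun i => x' i = x i ∧ y' i = y i)
    rw [Finset.card_univ, Fintype.card_fin] at this
    have : ((Finset.univ.filter (fun i : Fin m => x' i = x i ∧ y' i = y i)).card : ℝ)
        + (A.card : ℝ) = m := by exact_mod_cast this
    linarith
  have hBcard : (B.card : ℝ) ≤ c := by
    have hsum : ∑ i, η i = ((Finset.univ.filter fun i : Fin m => η i = 1).card : ℝ) := by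
      rw [Finset.sum_filter_add_sum_filter_not Finset.univ (fun i => η i = 1) η |>.symm]
      have h1 : ∑ i ∈ Finset.univ.filter (fun i : Fin m => η i = 1), η i
          = ((Finset.univ.filter fun i : Fin m => η i = 1).card : ℝ) := by
        rw [Finset.sum_congr rfl (fun i hi => (Finset.mem_filter.1 hi).2)]
        simp
      have h2 : ∑ i ∈ Finset.univ.filter (fun i : Fin m => ¬ η i = 1), η i = 0 := by
        refine Finset.sum_eq_zero fun i hi => ?_
        rcases hη01 i with h | h
        · exact h
        · exact absurd h (Finset.mem_filter.1 hi).2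
      rw [h1, h2, add_zero]
    have hcards := Finset.card_filter_add_card_filter_not
      (s := (Finset.univ : Finset (Fin m))) (p := fun i => η i = 1)
    rw [Finset.card_univ, Fintype.card_fin] at hcards
    have hcards' : ((Finset.univ.filter fun i : Fin m => η i = 1).card : ℝ)
        + (B.card : ℝ) = m := by exact_mod_cast hcards
    linarith [hZ.trans_eq hsum]
  have : (P.card : ℝ) ≤ (S.card : ℝ) + A.card + B.card := by exact_mod_cast hPcard
  linarith


lemma aux_mem {H : Type*} [NormedAddCommGroup H] [InnerProductSpace ℝ H]
    (m : ℕ) (x x' : Fin m → H) (y y' : Fin m → ℝ) (η : Fin m → ℝ)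
    (hη01 : ∀ i, η i = 0 ∨ η i = 1) (cap : ℝ) (hcap0 : 0 ≤ cap) (s : ℝ)
    (S : Finset (Fin m))
    (hmem : ∀ i ∈ S, η i = 1 ∧ x' i = x i ∧ y i = s ∧ y' i = s)
    (hS : 0 < S.card) (hcap : 1 / (S.card : ℝ) ≤ cap) :
    ∃ a ∈ redHull m x' y' η cap s, a ∈ convexHull ℝ (x '' {i : Fin m | y i = s}) := by
  have hn : (0:ℝ) < (S.card : ℝ) := by exact_mod_cast hS
  set γ : Fin m → ℝ := fun i => if i ∈ S then ((S.card : ℝ))⁻¹ else 0 with hγ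
  refine ⟨∑ i, γ i • x' i, ⟨γ, ?_, ?_, ?_, ?_, rfl⟩, ?_⟩
  · intro i; by_cases hi : i ∈ S <;> simp [hγ, hi, le_of_lt (inv_pos.2 hn)]
  · intro i; by_cases hi : i ∈ S
    · rw [hγ]; simp only [hi, if_pos]
      rw [(hmem i hi).1, one_mul]
      rwa [one_div] at hcap
    · rw [hγ]; simp only [hi, if_neg, not_false_iff]
      rcases hη01 i with h | h <;> simp [h, hcap0]
  · intro i hi
    by_cases hiS : i ∈ S
    · exact absurd (hmem i hiS).2.2.2 hi
    · simp [hγ, hiS]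
  · rw [hγ]
    rw [Finset.sum_ite_mem, Finset.univ_inter, Finset.sum_const, nsmul_eq_mul,
      mul_inv_cancel₀ (ne_of_gt hn)]
  · have hsum : ∑ i, γ i • x' i = ∑ i ∈ S, ((S.card : ℝ))⁻¹ • x i := by
      rw [← Finset.sum_subset S.subset_univ (fun i _ hi => by simp [hγ, hi])]
      exact Finset.sum_congr rfl fun i hi => by simp [hγ, hi, (hmem i hi).2.1]
    rw [hsum, ← Finset.smul_sum]
    have := S.centerMass_mem_convexHull (w := fun _ => (1:ℝ)) (z := x)
      (fun i _ => zero_le_one) (by simpa using hn)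
      (fun i hi => Set.mem_image_of_mem x (hmem i hi).2.2.1)
    simp [Finset.centerMass, Finset.sum_const, nsmul_eq_mul] at this
    exact this

/-- If μ < r/2 and ν - μ ≤ 2(r - 2μ), then `opt(ν,μ;D')` is uniformly bounded
over all datasets D' contaminated in at most μm points, by the maximum of ‖a-b‖²
over the Minkowski difference of the convex hulls of the uncontaminated classes,
which is finite. -/
theorem opt_uniformly_bounded
    {H : Type*} [NormedAddCommGroup H] [InnerProductSpace ℝ H]
    (m : ℕ) (hm : 0 < m) (x : Fin m → H) (y : Fin m → ℝ)
    (hy : ∀ i, y i = 1 ∨ y i = -1)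
    (r : ℝ)
    (hr : r = (1 / m) * min (Nat.card {i : Fin m | y i = 1} : ℝ)
        (Nat.card {i : Fin m | y i = -1} : ℝ))
    (hrpos : 0 < r)
    (μ ν : ℝ) (hμ0 : 0 < μ) (hμν : μ < ν) (hν1 : ν < 1)
    (kμ kν : ℕ) (hkμ : (kμ : ℝ) = μ * m) (hkν : (kν : ℝ) = ν * m)
    (hμr : μ < r / 2) (hkey : ν - μ ≤ 2 * (r - 2 * μ)) :
    (⨆ x' : Fin m → H, ⨆ y' : Fin m → ℝ,
      ⨆ (_ : (∀ i, y' i = 1 ∨ y' i = -1) ∧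
        (m : ℝ) - kμ ≤ (Nat.card {i : Fin m | x' i = x i ∧ y' i = y i} : ℝ)),
        svmOpt m x' y' ν μ)
      ≤ (⨆ a ∈ convexHull ℝ (x '' {i : Fin m | y i = 1}),
          ⨆ b ∈ convexHull ℝ (x '' {i : Fin m | y i = -1}),
            (‖a - b‖₊ ^ 2 : ℝ≥0∞)) ∧
    (⨆ a ∈ convexHull ℝ (x '' {i : Fin m | y i = 1}),
        ⨆ b ∈ convexHull ℝ (x '' {i : Fin m | y i = -1}),
          (‖a - b‖₊ ^ 2 : ℝ≥0∞)) < ⊤ := by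
  have hm' : (0:ℝ) < m := by exact_mod_cast hm
  have hνμ : (0:ℝ) < ν - μ := sub_pos.2 hμν
  have hdenom : (0:ℝ) < (ν - μ) * m := mul_pos hνμ hm'
  have hcap0 : (0:ℝ) ≤ 2 / ((ν - μ) * m) := le_of_lt (div_pos two_pos hdenom)
  -- class cardinalities
  have hrm : ∀ s : ℝ, (s = 1 ∨ s = -1) →
      r * m ≤ ((Finset.univ.filter fun i : Fin m => y i = s).card : ℝ) := by
    intro s hs
    have hmin : r * m = min (Nat.card {i : Fin m | y i = 1} : ℝ)
        (Nat.card {i : Fin m | y i = -1} : ℝ) := by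
      rw [hr]; field_simp
    have hc : ∀ t : ℝ, (Nat.card {i : Fin m | y i = t} : ℝ)
        = ((Finset.univ.filter fun i : Fin m => y i = t).card : ℝ) := by
      intro t; simp [Nat.card_eq_fintype_card, Fintype.card_subtype]
    rcases hs with h | h <;> rw [h, hmin]
    · rw [hc 1] at *; exact min_le_left _ _
    · rw [hc (-1)] at *; exact min_le_right _ _
  constructor
  · refine iSup_le fun x' => iSup_le fun y' => iSup_le fun hcond => ?_
    obtain ⟨hy', hG⟩ := hcond
    have hG' : (m:ℝ) - (kμ:ℝ) ≤
        ((Finset.univ.filter (fun i : Fin m => x' i = x i ∧ y' i = y i)).card : ℝ) := by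
      have : (Nat.card {i : Fin m | x' i = x i ∧ y' i = y i} : ℝ)
          = ((Finset.univ.filter (fun i : Fin m => x' i = x i ∧ y' i = y i)).card : ℝ) := by
        simp [Nat.card_eq_fintype_card, Fintype.card_subtype]
      linarith [hG, this.ge, this.le]
    rw [svmOpt]
    refine iSup₂_le fun η hη => ?_
    obtain ⟨hη01, hηsum⟩ := hη
    have hZ' : (m:ℝ) - (kμ:ℝ) ≤ ∑ i, η i := by
      have : (m:ℝ) * (1 - μ) = m - kμ := by rw [hkμ]; ring
      linarith [hηsum]
    -- construct elements in each reduced hull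
    have key : ∀ s : ℝ, (s = 1 ∨ s = -1) →
        ∃ a ∈ redHull m x' y' η (2 / ((ν - μ) * m)) s,
          a ∈ convexHull ℝ (x '' {i : Fin m | y i = s}) := by
      intro s hs
      set S := Finset.univ.filter fun i : Fin m =>
        η i = 1 ∧ x' i = x i ∧ y i = s ∧ y' i = s with hSdef
      have hcard := aux_card m x x' y y' η hη01 s (kμ:ℝ) hG' hZ'
      have hSge : r * m - 2 * kμ ≤ (S.card : ℝ) := by
        have := hrm s hs
        linarith
      have hSpos : (0:ℝ) < (S.card : ℝ) := by
        have : 0 < r * m - 2 * kμ := by rw [hkμ]; nlinarith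
        linarith
      have hSnat : 0 < S.card := by exact_mod_cast hSpos
      have hcap : 1 / (S.card : ℝ) ≤ 2 / ((ν - μ) * m) := by
        rw [div_le_div_iff₀ hSpos hdenom]
        rw [hkμ] at hSge
        nlinarith
      refine aux_mem m x x' y y' η hη01 _ hcap0 s S ?_ hSnat hcap
      intro i hi
      have := Finset.mem_filter.1 hi
      exact this.2
    obtain ⟨a, haU, haC⟩ := key 1 (Or.inl rfl)
    obtain ⟨b, hbU, hbC⟩ := key (-1) (Or.inr rfl)
    calc (⨅ f ∈ {f : H | ∃ a ∈ redHull m x' y' η (2 / ((ν - μ) * m)) 1,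
            ∃ b ∈ redHull m x' y' η (2 / ((ν - μ) * m)) (-1), f = a - b},
          (‖f‖₊ ^ 2 : ℝ≥0∞))
        ≤ (‖a - b‖₊ ^ 2 : ℝ≥0∞) := iInf₂_le (a - b) ⟨a, haU, b, hbU, rfl⟩
      _ ≤ ⨆ b' ∈ convexHull ℝ (x '' {i : Fin m | y i = -1}), (‖a - b'‖₊ ^ 2 : ℝ≥0∞) :=
          le_iSup₂ (f := fun b' (_ : b' ∈ convexHull ℝ (x '' {i : Fin m | y i = -1})) =>
            (‖a - b'‖₊ ^ 2 : ℝ≥0∞)) b hbC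
      _ ≤ ⨆ a' ∈ convexHull ℝ (x '' {i : Fin m | y i = 1}),
            ⨆ b' ∈ convexHull ℝ (x '' {i : Fin m | y i = -1}), (‖a' - b'‖₊ ^ 2 : ℝ≥0∞) :=
          le_iSup₂ (f := fun a' (_ : a' ∈ convexHull ℝ (x '' {i : Fin m | y i = 1})) =>
            ⨆ b' ∈ convexHull ℝ (x '' {i : Fin m | y i = -1}), (‖a' - b'‖₊ ^ 2 : ℝ≥0∞)) a haC
  · -- finiteness
    set R : ℝ≥0 := Finset.univ.sup fun i => ‖x i‖₊ with hR
    have hball : ∀ s : ℝ, convexHull ℝ (x '' {i : Fin m | y i = s})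
        ⊆ Metric.closedBall (0 : H) R := by
      intro s
      refine convexHull_min ?_ (convex_closedBall _ _)
      rintro p ⟨i, _, rfl⟩
      rw [Metric.mem_closedBall, dist_zero_right]
      exact_mod_cast Finset.le_sup (f := fun i => ‖x i‖₊) (Finset.mem_univ i)
    have hbound : ∀ a ∈ convexHull ℝ (x '' {i : Fin m | y i = 1}),
        ∀ b ∈ convexHull ℝ (x '' {i : Fin m | y i = -1}),
        (‖a - b‖₊ ^ 2 : ℝ≥0∞) ≤ (((2 * R) ^ 2 : ℝ≥0) : ℝ≥0∞) := by
      intro a ha b hb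
      have ha' : ‖a‖ ≤ R := by
        have := hball 1 ha; rwa [Metric.mem_closedBall, dist_zero_right] at this
      have hb' : ‖b‖ ≤ R := by
        have := hball (-1) hb; rwa [Metric.mem_closedBall, dist_zero_right] at this
      have h1 : ‖a - b‖₊ ≤ 2 * R := by
        have : ‖a - b‖ ≤ 2 * (R:ℝ) := by
          calc ‖a - b‖ ≤ ‖a‖ + ‖b‖ := norm_sub_le a b
            _ ≤ 2 * (R:ℝ) := by linarith
        exact_mod_cast this
      calc (‖a - b‖₊ ^ 2 : ℝ≥0∞) = (((‖a - b‖₊ ^ 2 : ℝ≥0)) : ℝ≥0∞) := by push_cast; ring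
        _ ≤ (((2 * R) ^ 2 : ℝ≥0) : ℝ≥0∞) := by exact_mod_cast pow_le_pow_left₀ (zero_le) h1 2
    calc (⨆ a ∈ convexHull ℝ (x '' {i : Fin m | y i = 1}),
          ⨆ b ∈ convexHull ℝ (x '' {i : Fin m | y i = -1}), (‖a - b‖₊ ^ 2 : ℝ≥0∞))
        ≤ (((2 * R) ^ 2 : ℝ≥0) : ℝ≥0∞) :=
          iSup₂_le fun a ha => iSup₂_le fun b hb => hbound a ha b hb
      _ < ⊤ := ENNReal.coe_lt_top
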